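/- arXiv:2104.14765 — 2 statements merged into one kernel-verified Lean document; each statement's English description precedes it below -/
import Mathlib

section
/- One has the equalities of ideals of ℤ[G]: 𝓙 = Σ_{i=1}^s g̃^{i−1}·J_i = Σ_{i=1}^s (1 − φ̃^{-1})^{i−1}·J_i. -/
open MonoidAlgebra Finset

/-- The sum `ν_H = Σ_{σ ∈ H} σ` of the elements of a subgroup `H` in the group algebra. -/
noncomputable def nuElt (R : Type) [CommRing R] {G : Type} [CommGroup G] [Fintype G]
    (H : Subgroup G) : MonoidAlgebra R G :=
  letI := Classical.decPred (· ∈ H)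
  ∑ σ ∈ Finset.univ.filter (· ∈ H), MonoidAlgebra.of R G σ

/-- `I = I_1 × ⋯ × I_s` where `I_l` is the (possibly trivial) cyclic subgroup generated
by `σ l`: every element of `I` is, in a unique way, the product of elements of the
subgroups `⟨σ l⟩`. -/
def IsDecomp {G : Type} [CommGroup G] (I : Subgroup G) {s : ℕ} (σ : Fin s → G) : Prop :=
  (∀ l, σ l ∈ I) ∧
    ∀ g ∈ I, ∃! x : ∀ l, Subgroup.zpowers (σ l), (∏ l, ((x l : G))) = g

/-- The ideal `Z_i` generated by the products `ν_{l_1} ⋯ ν_{l_{s-i}}` over all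
`(s-i)`-element subsets `{l_1 < ⋯ < l_{s-i}}` of `{1, …, s}`. -/
noncomputable def Zideal {G : Type} [CommGroup G] [Fintype G] {s : ℕ} (σ : Fin s → G)
    (i : ℕ) : Ideal (MonoidAlgebra ℤ G) :=
  Ideal.span {x | ∃ T : Finset (Fin s), T.card = s - i ∧
    x = ∏ l ∈ T, nuElt ℤ (Subgroup.zpowers (σ l))}

/-- The ideal `𝓘_H = ker(ℤ[G] → ℤ[G/H])`. -/
noncomputable def kerIdeal {G : Type} [CommGroup G] [Fintype G] (H : Subgroup G) :
    Ideal (MonoidAlgebra ℤ G) :=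
  RingHom.ker (MonoidAlgebra.mapDomainRingHom ℤ (QuotientGroup.mk' H))

/-- The ideal `J_i = Σ_{j=0}^{s-i} Z_{i+j} 𝓘_I^j` (for `1 ≤ i ≤ s`). -/
noncomputable def Jideal {G : Type} [CommGroup G] [Fintype G] (I : Subgroup G)
    {s : ℕ} (σ : Fin s → G) (i : ℕ) : Ideal (MonoidAlgebra ℤ G) :=
  ∑ j ∈ Finset.range (s - i + 1), Zideal σ (i + j) * (kerIdeal I) ^ j

section AuxLemmas
attribute [local instance] Classical.propDecidable


section Aux
variable {G : Type} [CommGroup G] [Fintype G]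

lemma mapDomainRingHom_of {Q : Type} [CommGroup Q] (f : G →* Q) (g : G) :
    MonoidAlgebra.mapDomainRingHom ℤ f (MonoidAlgebra.of ℤ G g) = MonoidAlgebra.of ℤ Q (f g) := by
  simp [MonoidAlgebra.mapDomainRingHom_apply, MonoidAlgebra.of_apply, Finsupp.mapDomain_single]

lemma mem_kerIdeal_iff (H : Subgroup G) (f : MonoidAlgebra ℤ G) :
    f ∈ kerIdeal H ↔ MonoidAlgebra.mapDomain (⇑(QuotientGroup.mk' H)) f = 0 := Iff.rfl

lemma ofSub_mem_ker (H : Subgroup G) {h : G} (hh : h ∈ H) :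
    MonoidAlgebra.of ℤ G h - 1 ∈ kerIdeal H := by
  have : (MonoidAlgebra.mapDomainRingHom ℤ (QuotientGroup.mk' H))
      (MonoidAlgebra.of ℤ G h - 1) = 0 := by
    rw [map_sub, map_one, mapDomainRingHom_of]
    rw [QuotientGroup.mk'_apply, (QuotientGroup.eq_one_iff h).2 hh, map_one, sub_self]
  exact this

lemma ker_le_span (H : Subgroup G) :
    kerIdeal H ≤ Ideal.span {x | ∃ h ∈ H, x = MonoidAlgebra.of ℤ G h - 1} := by
  intro f hf
  set S := Ideal.span {x | ∃ h ∈ H, x = MonoidAlgebra.of ℤ G h - 1} with hS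
  let md : MonoidAlgebra ℤ G →+ MonoidAlgebra ℤ G :=
    { toFun := MonoidAlgebra.mapDomain (fun g : G => ((g : G ⧸ H)).out),
      map_zero' := MonoidAlgebra.mapDomain_zero _, map_add' := MonoidAlgebra.mapDomain_add _ }
  have key : ∀ f : MonoidAlgebra ℤ G, f - md f ∈ S := by
    intro f
    have hsing : ∀ (a : G) (c : ℤ),
        (MonoidAlgebra.single a c : MonoidAlgebra ℤ G)
          - md (MonoidAlgebra.single a c) ∈ S := by
      intro a c
      have hmd : md (MonoidAlgebra.single a c)
          = MonoidAlgebra.single (((a : G ⧸ H)).out) c := MonoidAlgebra.mapDomain_single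
      rw [hmd]
      have hmem : ((((a : G ⧸ H)).out)⁻¹ * a) ∈ H := by
        refine QuotientGroup.eq.mp ?_
        rw [QuotientGroup.out_eq']
      have h1 : (MonoidAlgebra.single a c : MonoidAlgebra ℤ G)
          - MonoidAlgebra.single (((a : G ⧸ H)).out) c
          = MonoidAlgebra.single (((a : G ⧸ H)).out) c *
            (MonoidAlgebra.of ℤ G ((((a : G ⧸ H)).out)⁻¹ * a) - 1) := by
        rw [mul_sub, mul_one, MonoidAlgebra.of_apply, MonoidAlgebra.single_mul_single,
          mul_inv_cancel_left, mul_one]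
      rw [h1]
      exact Ideal.mul_mem_left _ _ (Ideal.subset_span ⟨_, hmem, rfl⟩)
    have hrepr : f = ∑ a ∈ f.coeff.support, (MonoidAlgebra.single a (f.coeff a) : MonoidAlgebra ℤ G) :=
      (MonoidAlgebra.sum_coeff_single f).symm
    have heq : f - md f = ∑ a ∈ f.coeff.support,
        ((MonoidAlgebra.single a (f.coeff a) : MonoidAlgebra ℤ G) - md (MonoidAlgebra.single a (f.coeff a))) := by
      rw [Finset.sum_sub_distrib, ← map_sum, ← hrepr]
    rw [heq]
    exact Ideal.sum_mem S fun a _ => hsing a (f.coeff a)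
  have h0 : md f = 0 := by
    show MonoidAlgebra.mapDomain _ _ = _
    have hcomp : (fun g : G => ((g : G ⧸ H)).out)
        = (Quotient.out : G ⧸ H → G) ∘ ⇑(QuotientGroup.mk' H) := rfl
    rw [hcomp, show MonoidAlgebra.mapDomain ((Quotient.out : G ⧸ H → G) ∘ ⇑(QuotientGroup.mk' H)) f
          = MonoidAlgebra.mapDomain (Quotient.out : G ⧸ H → G)
            (MonoidAlgebra.mapDomain (⇑(QuotientGroup.mk' H)) f) from
          congrArg MonoidAlgebra.ofCoeff Finsupp.mapDomain_comp,
        (mem_kerIdeal_iff H f).1 hf, MonoidAlgebra.mapDomain_zero]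
  have hk := key f
  rwa [h0, sub_zero] at hk

lemma ker_eq_span (H : Subgroup G) :
    kerIdeal H = Ideal.span {x | ∃ h ∈ H, x = MonoidAlgebra.of ℤ G h - 1} := by
  refine le_antisymm (ker_le_span H) (Ideal.span_le.2 ?_)
  rintro x ⟨h, hh, rfl⟩
  exact ofSub_mem_ker H hh

end Aux

section Aux2
variable {G : Type} [CommGroup G] [Fintype G]

lemma ker_mono {H K : Subgroup G} (hHK : H ≤ K) : kerIdeal H ≤ kerIdeal K := by
  rw [ker_eq_span H]
  refine Ideal.span_le.2 ?_
  rintro x ⟨h, hh, rfl⟩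
  exact ofSub_mem_ker K (hHK hh)

lemma one_sub_dvd (φt : G) : ∀ n : ℤ,
    (1 - MonoidAlgebra.of ℤ G φt⁻¹) ∣ (MonoidAlgebra.of ℤ G (φt ^ n) - 1) := by
  have hnat : ∀ m : ℕ, (1 - MonoidAlgebra.of ℤ G φt⁻¹) ∣ (1 - (MonoidAlgebra.of ℤ G φt⁻¹) ^ m) := by
    intro m
    refine ⟨∑ i ∈ Finset.range m, (MonoidAlgebra.of ℤ G φt⁻¹) ^ i, ?_⟩
    have := geom_sum_mul (MonoidAlgebra.of ℤ G φt⁻¹) m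
    linear_combination this
  intro n
  obtain ⟨m, rfl | rfl⟩ := Int.eq_nat_or_neg n
  · rw [zpow_natCast]
    have h1 : MonoidAlgebra.of ℤ G (φt ^ m) - 1
        = (MonoidAlgebra.of ℤ G φt) ^ m * (1 - (MonoidAlgebra.of ℤ G φt⁻¹) ^ m) := by
      rw [mul_sub, mul_one, ← map_pow, ← map_pow, ← map_mul, ← mul_pow, mul_inv_cancel,
        one_pow, map_one]
    rw [h1]
    exact Dvd.dvd.mul_left (hnat m) _
  · rw [zpow_neg, zpow_natCast, ← inv_pow, map_pow]
    have h1 : (MonoidAlgebra.of ℤ G φt⁻¹) ^ m - 1 = -(1 - (MonoidAlgebra.of ℤ G φt⁻¹) ^ m) := by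
      ring
    rw [h1]
    exact (hnat m).neg_right

lemma kerD_eq (I D : Subgroup G) (hID : I ≤ D) (φt : G) (hφt : φt ∈ D)
    (hφgen : ∀ d ∈ D, ∃ n : ℤ, φt ^ n * d⁻¹ ∈ I) :
    kerIdeal D = kerIdeal I + Ideal.span {1 - MonoidAlgebra.of ℤ G φt⁻¹} := by
  refine le_antisymm ?_ ?_
  · rw [ker_eq_span D]
    refine Ideal.span_le.2 ?_
    rintro x ⟨d, hd, rfl⟩
    obtain ⟨n, hn⟩ := hφgen d hd
    have hd' : MonoidAlgebra.of ℤ G d - 1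
        = MonoidAlgebra.of ℤ G (φt ^ n) * (MonoidAlgebra.of ℤ G ((φt ^ n * d⁻¹)⁻¹) - 1)
          + (MonoidAlgebra.of ℤ G (φt ^ n) - 1) := by
      rw [mul_sub, mul_one, ← map_mul]
      have : φt ^ n * (φt ^ n * d⁻¹)⁻¹ = d := by
        rw [mul_inv, inv_inv, ← mul_assoc, mul_inv_cancel, one_mul]
      rw [this]; ring
    rw [hd']
    refine Submodule.add_mem _ (Submodule.mem_sup_left ?_) (Submodule.mem_sup_right ?_)
    · exact Ideal.mul_mem_left _ _ (ofSub_mem_ker I (inv_mem hn))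
    · obtain ⟨c, hc⟩ := one_sub_dvd φt n
      rw [hc]
      exact Ideal.mul_mem_right _ _ (Ideal.subset_span rfl)
  · refine sup_le (ker_mono hID) ?_
    rw [Ideal.span_le]
    rintro x rfl
    have : (1 : MonoidAlgebra ℤ G) - MonoidAlgebra.of ℤ G φt⁻¹
        = -(MonoidAlgebra.of ℤ G φt⁻¹ - 1) := by ring
    rw [this]
    exact Submodule.neg_mem _ (ofSub_mem_ker D (inv_mem hφt))

end Aux2

section Aux3
variable {G : Type} [CommGroup G] [Fintype G]

lemma nu_mul_of (H : Subgroup G) {h : G} (hh : h ∈ H) :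
    nuElt ℤ H * MonoidAlgebra.of ℤ G h = nuElt ℤ H := by
  classical
  unfold nuElt
  rw [Finset.sum_mul]
  have hof : ∀ σ : G, MonoidAlgebra.of ℤ G σ * MonoidAlgebra.of ℤ G h
      = MonoidAlgebra.of ℤ G (σ * h) := fun σ => (map_mul (MonoidAlgebra.of ℤ G) σ h).symm
  simp_rw [hof]
  refine Finset.sum_equiv (Equiv.mulRight h) ?_ ?_
  · intro σ
    simp only [Finset.mem_filter, Finset.mem_univ, true_and, Equiv.coe_mulRight]
    exact (mul_mem_cancel_right hh).symm
  · intro σ _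
    rfl

lemma nu_mul_ker_eq_zero (H : Subgroup G) {f : MonoidAlgebra ℤ G} (hf : f ∈ kerIdeal H) :
    nuElt ℤ H * f = 0 := by
  have hle : kerIdeal H ≤ LinearMap.ker (LinearMap.mulLeft (MonoidAlgebra ℤ G) (nuElt ℤ H)) := by
    rw [ker_eq_span H, Ideal.span_le]
    rintro x ⟨h, hh, rfl⟩
    simp only [SetLike.mem_coe, LinearMap.mem_ker, LinearMap.mulLeft_apply]
    rw [mul_sub, mul_one, nu_mul_of H hh, sub_self]
  simpa using hle hf

lemma nu_sub_card_mem (H : Subgroup G) :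
    nuElt ℤ H - (Nat.card H : MonoidAlgebra ℤ G) ∈ kerIdeal H := by
  have : (MonoidAlgebra.mapDomainRingHom ℤ (QuotientGroup.mk' H))
      (nuElt ℤ H - (Nat.card H : MonoidAlgebra ℤ G)) = 0 := by
    rw [map_sub, map_natCast]
    unfold nuElt
    rw [map_sum]
    have h1 : ∀ σ ∈ Finset.univ.filter (· ∈ H),
        (MonoidAlgebra.mapDomainRingHom ℤ (QuotientGroup.mk' H)) (MonoidAlgebra.of ℤ G σ)
          = 1 := by
      intro σ hσ
      rw [mapDomainRingHom_of, QuotientGroup.mk'_apply,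
        (QuotientGroup.eq_one_iff σ).2 (Finset.mem_filter.1 hσ).2, map_one]
    rw [Finset.sum_congr rfl h1, Finset.sum_const, nsmul_eq_mul, mul_one]
    have hcard : ((Finset.univ.filter (· ∈ H)).card : MonoidAlgebra ℤ (G ⧸ H))
        = (Nat.card H : MonoidAlgebra ℤ (G ⧸ H)) := by
      congr 1
      rw [Nat.card_eq_fintype_card]
      convert (Fintype.card_subtype (· ∈ H)).symm using 2
    rw [hcard, sub_self]
  exact this

lemma nuElt_eq_sum_subtype (H : Subgroup G) :
    nuElt ℤ H = ∑ g : H, MonoidAlgebra.of ℤ G (g : G) := by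
  classical
  unfold nuElt
  exact Finset.sum_subtype _ (fun x => by simp) _

lemma nu_prod {s : ℕ} {I : Subgroup G} {σ : Fin s → G} (hdec : IsDecomp I σ) :
    ∏ l, nuElt ℤ (Subgroup.zpowers (σ l)) = nuElt ℤ I := by
  classical
  simp_rw [nuElt_eq_sum_subtype]
  have h1 : (∏ l, ∑ g : Subgroup.zpowers (σ l), MonoidAlgebra.of ℤ G (g : G))
      = ∑ x : (∀ l, Subgroup.zpowers (σ l)), MonoidAlgebra.of ℤ G (∏ l, ((x l : G))) := by
    rw [Finset.prod_univ_sum, Fintype.piFinset_univ]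
    exact Finset.sum_congr rfl fun x _ => (map_prod _ _ _).symm
  rw [h1]
  have hmemI : ∀ x : (∀ l, Subgroup.zpowers (σ l)), (∏ l, ((x l : G))) ∈ I := by
    intro x
    exact Subgroup.prod_mem I fun l _ => (Subgroup.zpowers_le.2 (hdec.1 l)) (x l).2
  set F : (∀ l, Subgroup.zpowers (σ l)) → I := fun x => ⟨∏ l, ((x l : G)), hmemI x⟩ with hF
  have hbij : Function.Bijective F := by
    constructor
    · intro x y hxy
      obtain ⟨z, _, huniq⟩ := hdec.2 (∏ l, ((x l : G))) (hmemI x)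
      have hyx : (∏ l, ((y l : G))) = ∏ l, ((x l : G)) := (congrArg Subtype.val hxy).symm
      rw [huniq x rfl, huniq y hyx]
    · intro g
      obtain ⟨z, hz, _⟩ := hdec.2 (g : G) g.2
      exact ⟨z, Subtype.ext hz⟩
  exact Fintype.sum_bijective F hbij _ _ (fun x => rfl)

end Aux3

section Aux4
variable {R : Type} [CommRing R]

lemma isum_le {ι : Type} {s : Finset ι} {f : ι → Ideal R} {K : Ideal R}
    (h : ∀ i ∈ s, f i ≤ K) : ∑ i ∈ s, f i ≤ K := by
  rw [Ideal.sum_eq_sup]; exact Finset.sup_le h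

lemma le_isum {ι : Type} {s : Finset ι} (f : ι → Ideal R) {i : ι} (hi : i ∈ s) :
    f i ≤ ∑ j ∈ s, f j := by
  rw [Ideal.sum_eq_sup]; exact Finset.le_sup hi

lemma ideal_add_pow_le (P Q : Ideal R) (m : ℕ) :
    (P + Q) ^ m ≤ ∑ k ∈ Finset.range (m + 1), P ^ k * Q ^ (m - k) := by
  rw [add_pow]
  exact isum_le fun k hk => le_trans Ideal.mul_le_left (le_isum (fun k => P ^ k * Q ^ (m - k)) hk)

end Aux4

section Aux5
variable {G : Type} [CommGroup G] [Fintype G] {s : ℕ} {I : Subgroup G} {σ : Fin s → G}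

lemma Z_top (σ : Fin s → G) {m : ℕ} (hm : s ≤ m) : Zideal σ m = ⊤ := by
  rw [Ideal.eq_top_iff_one]
  refine Ideal.subset_span ⟨∅, ?_, by simp⟩
  simp [Nat.sub_eq_zero_of_le hm]

lemma nu_mem_Z (hdec : IsDecomp I σ) (m : ℕ) : nuElt ℤ I ∈ Zideal σ m := by
  classical
  obtain ⟨T, -, hT⟩ := Finset.exists_subset_card_eq (s := (Finset.univ : Finset (Fin s)))
    (n := s - m) (by simpa using Nat.sub_le s m)
  have hprod : nuElt ℤ I
      = (∏ l ∈ Finset.univ \ T, nuElt ℤ (Subgroup.zpowers (σ l))) *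
        (∏ l ∈ T, nuElt ℤ (Subgroup.zpowers (σ l))) := by
    rw [Finset.prod_sdiff (Finset.subset_univ T), nu_prod hdec]
  rw [hprod]
  exact Ideal.mul_mem_left _ _ (Ideal.subset_span ⟨T, hT, rfl⟩)

lemma Z_le_J (I : Subgroup G) (σ : Fin s → G) (m : ℕ) : Zideal σ m ≤ Jideal I σ m := by
  have h0 : (0 : ℕ) ∈ Finset.range (s - m + 1) := Finset.mem_range.2 (Nat.succ_pos _)
  have := le_isum (fun j => Zideal σ (m + j) * (kerIdeal I) ^ j) h0
  simpa [Jideal] using this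

lemma spanNu_mul_ker (I : Subgroup G) :
    Ideal.span {nuElt ℤ I} * kerIdeal I = ⊥ := by
  rw [eq_bot_iff]
  refine Ideal.mul_le.2 fun r hr f hf => ?_
  obtain ⟨c, rfl⟩ := Ideal.mem_span_singleton.1 hr
  rw [Submodule.mem_bot, mul_comm (nuElt ℤ I) c, mul_assoc, nu_mul_ker_eq_zero I hf, mul_zero]

lemma card_le_nu_add_ker (I : Subgroup G) :
    Ideal.span {((Nat.card I : MonoidAlgebra ℤ G))}
      ≤ Ideal.span {nuElt ℤ I} + kerIdeal I := by
  rw [Ideal.span_le, Set.singleton_subset_iff]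
  have : ((Nat.card I : MonoidAlgebra ℤ G))
      = nuElt ℤ I - (nuElt ℤ I - (Nat.card I : MonoidAlgebra ℤ G)) := by ring
  rw [this]
  exact Submodule.sub_mem _
    (Submodule.mem_sup_left (Ideal.subset_span rfl))
    (Submodule.mem_sup_right (nu_sub_card_mem I))

lemma NJ (hdec : IsDecomp I σ) (m : ℕ) :
    Ideal.span {((Nat.card I : MonoidAlgebra ℤ G))} * Jideal I σ (m + 1) ≤ Jideal I σ m := by
  by_cases hm : s ≤ m
  · have : Jideal I σ m = ⊤ := by
      rw [eq_top_iff]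
      exact le_trans (by rw [Z_top σ hm]) (Z_le_J I σ m)
    rw [this]; exact le_top
  push_neg at hm
  rw [Jideal, Finset.mul_sum]
  refine isum_le fun j hj => ?_
  have hj' : j ≤ s - m - 1 := by
    have := Finset.mem_range.1 hj; omega
  calc Ideal.span {((Nat.card I : MonoidAlgebra ℤ G))} * (Zideal σ (m + 1 + j) * kerIdeal I ^ j)
      ≤ (Ideal.span {nuElt ℤ I} + kerIdeal I) * (Zideal σ (m + 1 + j) * kerIdeal I ^ j) :=
        Ideal.mul_mono_left (card_le_nu_add_ker I)
    _ = Ideal.span {nuElt ℤ I} * (Zideal σ (m + 1 + j) * kerIdeal I ^ j)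
        + kerIdeal I * (Zideal σ (m + 1 + j) * kerIdeal I ^ j) := add_mul _ _ _
    _ ≤ Jideal I σ m := by
        refine sup_le ?_ ?_
        · rcases Nat.eq_zero_or_pos j with rfl | hjpos
          · calc Ideal.span {nuElt ℤ I} * (Zideal σ (m + 1) * kerIdeal I ^ 0)
                ≤ Ideal.span {nuElt ℤ I} := Ideal.mul_le_left
              _ ≤ Zideal σ m := by
                  rw [Ideal.span_le, Set.singleton_subset_iff]
                  exact nu_mem_Z hdec m
              _ ≤ Jideal I σ m := Z_le_J I σ m
          · obtain ⟨j', rfl⟩ := Nat.exists_eq_add_of_lt hjpos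
            have hre : Ideal.span {nuElt ℤ I} * (Zideal σ (m + 1 + (0 + j' + 1)) * kerIdeal I ^ (0 + j' + 1))
                = (Ideal.span {nuElt ℤ I} * kerIdeal I) *
                  (Zideal σ (m + 1 + (0 + j' + 1)) * kerIdeal I ^ (0 + j')) := by
              ring
            rw [hre, spanNu_mul_ker]
            exact le_trans Ideal.mul_le_left bot_le
        · have hre : kerIdeal I * (Zideal σ (m + 1 + j) * kerIdeal I ^ j)
              = Zideal σ (m + (j + 1)) * kerIdeal I ^ (j + 1) := by
            rw [show m + 1 + j = m + (j + 1) by omega]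
            ring
          rw [hre]
          refine le_isum (fun j => Zideal σ (m + j) * (kerIdeal I) ^ j) ?_
          exact Finset.mem_range.2 (by omega)

lemma NJpow (hdec : IsDecomp I σ) (d m : ℕ) :
    (Ideal.span {((Nat.card I : MonoidAlgebra ℤ G))}) ^ d * Jideal I σ (m + d)
      ≤ Jideal I σ m := by
  induction d generalizing m with
  | zero => simp
  | succ d ih =>
    have h1 : (Ideal.span {((Nat.card I : MonoidAlgebra ℤ G))}) ^ (d + 1) * Jideal I σ (m + (d + 1))
        = (Ideal.span {((Nat.card I : MonoidAlgebra ℤ G))}) ^ d *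
          (Ideal.span {((Nat.card I : MonoidAlgebra ℤ G))} * Jideal I σ ((m + d) + 1)) := by
      rw [show m + (d + 1) = (m + d) + 1 by omega]
      ring
    rw [h1]
    exact le_trans (Ideal.mul_mono_right (NJ hdec (m + d))) (ih m)

end Aux5

end AuxLemmas

/-- `𝓙 = Σ_{i=1}^s g̃^{i−1}·J_i = Σ_{i=1}^s (1 − φ̃⁻¹)^{i−1}·J_i`, where
`𝓙 = Σ_{i=1}^s Z_i 𝓘_D^{i−1}` and `g̃ = 1 − φ̃⁻¹ + #I`. -/
theorem statement12 {G : Type} [CommGroup G] [Fintype G] (I D : Subgroup G) (hID : I ≤ D)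
    (φt : G) (hφt : φt ∈ D) (hφgen : ∀ d ∈ D, ∃ n : ℤ, φt ^ n * d⁻¹ ∈ I)
    {s : ℕ} (σ : Fin s → G) (hdec : IsDecomp I σ) :
    (∑ i ∈ Finset.range s, Zideal σ (i + 1) * (kerIdeal D) ^ i
      = ∑ i ∈ Finset.range s,
          Ideal.span {(1 - MonoidAlgebra.of ℤ G φt⁻¹
            + (Nat.card I : MonoidAlgebra ℤ G)) ^ i} * Jideal I σ (i + 1)) ∧
    (∑ i ∈ Finset.range s, Zideal σ (i + 1) * (kerIdeal D) ^ i
      = ∑ i ∈ Finset.range s,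
          Ideal.span {(1 - MonoidAlgebra.of ℤ G φt⁻¹) ^ i} * Jideal I σ (i + 1)) := by
  have hkerD : kerIdeal D = kerIdeal I + Ideal.span {1 - MonoidAlgebra.of ℤ G φt⁻¹} :=
    kerD_eq I D hID φt hφt hφgen
  set X : Ideal (MonoidAlgebra ℤ G) := Ideal.span {1 - MonoidAlgebra.of ℤ G φt⁻¹} with hX
  set N : Ideal (MonoidAlgebra ℤ G) :=
    Ideal.span {((Nat.card I : MonoidAlgebra ℤ G))} with hN
  have main : (∑ i ∈ Finset.range s, Zideal σ (i + 1) * (kerIdeal D) ^ i)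
      = ∑ k ∈ Finset.range s, X ^ k * Jideal I σ (k + 1) := by
    refine le_antisymm ?_ ?_
    · refine isum_le fun i hi => ?_
      have hi' : i < s := Finset.mem_range.1 hi
      have h1 : (kerIdeal D) ^ i
          ≤ ∑ k ∈ Finset.range (i + 1), X ^ k * (kerIdeal I) ^ (i - k) := by
        rw [hkerD, add_comm (kerIdeal I) X]
        exact ideal_add_pow_le X (kerIdeal I) i
      calc Zideal σ (i + 1) * (kerIdeal D) ^ i
          ≤ Zideal σ (i + 1) * ∑ k ∈ Finset.range (i + 1), X ^ k * (kerIdeal I) ^ (i - k) :=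
            Ideal.mul_mono_right h1
        _ = ∑ k ∈ Finset.range (i + 1),
              Zideal σ (i + 1) * (X ^ k * (kerIdeal I) ^ (i - k)) := Finset.mul_sum _ _ _
        _ ≤ ∑ k ∈ Finset.range s, X ^ k * Jideal I σ (k + 1) := by
            refine isum_le fun k hk => ?_
            have hk' : k ≤ i := Nat.lt_succ_iff.1 (Finset.mem_range.1 hk)
            have h2 : Zideal σ (i + 1) * (X ^ k * (kerIdeal I) ^ (i - k))
                = X ^ k * (Zideal σ ((k + 1) + (i - k)) * (kerIdeal I) ^ (i - k)) := by
              rw [show (k + 1) + (i - k) = i + 1 by omega]; ring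
            rw [h2]
            refine le_trans (Ideal.mul_mono_right ?_)
              (le_isum (fun k => X ^ k * Jideal I σ (k + 1)) (Finset.mem_range.2 (by omega)))
            exact le_isum (fun j => Zideal σ ((k + 1) + j) * (kerIdeal I) ^ j)
              (Finset.mem_range.2 (by omega))
    · refine isum_le fun k hk => ?_
      have hk' : k < s := Finset.mem_range.1 hk
      rw [Jideal, Finset.mul_sum]
      refine isum_le fun j hj => ?_
      have hj' : j ≤ s - (k + 1) := by
        have := Finset.mem_range.1 hj; omega
      have h2 : X ^ k * (Zideal σ (k + 1 + j) * (kerIdeal I) ^ j)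
          = Zideal σ ((k + j) + 1) * (X ^ k * (kerIdeal I) ^ j) := by
        rw [show k + 1 + j = (k + j) + 1 by omega]; ring
      rw [h2]
      have h3 : X ^ k * (kerIdeal I) ^ j ≤ (kerIdeal D) ^ (k + j) := by
        rw [pow_add]
        exact Ideal.mul_mono (Ideal.pow_right_mono (by rw [hkerD]; exact le_sup_right) k)
          (Ideal.pow_right_mono (by rw [hkerD]; exact le_sup_left) j)
      exact le_trans (Ideal.mul_mono_right h3)
        (le_isum (fun i => Zideal σ (i + 1) * (kerIdeal D) ^ i) (Finset.mem_range.2 (by omega)))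
  have shift : ∀ (Y Y' : Ideal (MonoidAlgebra ℤ G)), Y ≤ Y' + N →
      (∑ k ∈ Finset.range s, Y ^ k * Jideal I σ (k + 1))
        ≤ ∑ k ∈ Finset.range s, Y' ^ k * Jideal I σ (k + 1) := by
    intro Y Y' hY
    refine isum_le fun i hi => ?_
    have hi' : i < s := Finset.mem_range.1 hi
    calc Y ^ i * Jideal I σ (i + 1)
        ≤ (∑ k ∈ Finset.range (i + 1), Y' ^ k * N ^ (i - k)) * Jideal I σ (i + 1) :=
          Ideal.mul_mono_left (le_trans (Ideal.pow_right_mono hY i) (ideal_add_pow_le Y' N i))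
      _ = ∑ k ∈ Finset.range (i + 1), (Y' ^ k * N ^ (i - k)) * Jideal I σ (i + 1) :=
          Finset.sum_mul _ _ _
      _ ≤ ∑ k ∈ Finset.range s, Y' ^ k * Jideal I σ (k + 1) := by
          refine isum_le fun k hk => ?_
          have hk' : k ≤ i := Nat.lt_succ_iff.1 (Finset.mem_range.1 hk)
          have h2 : (Y' ^ k * N ^ (i - k)) * Jideal I σ (i + 1)
              = Y' ^ k * (N ^ (i - k) * Jideal I σ ((k + 1) + (i - k))) := by
            rw [show (k + 1) + (i - k) = i + 1 by omega]; ring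
          rw [h2]
          exact le_trans (Ideal.mul_mono_right (NJpow hdec (i - k) (k + 1)))
            (le_isum (fun k => Y' ^ k * Jideal I σ (k + 1)) (Finset.mem_range.2 (by omega)))
  set g : MonoidAlgebra ℤ G :=
    1 - MonoidAlgebra.of ℤ G φt⁻¹ + (Nat.card I : MonoidAlgebra ℤ G) with hg
  have hXg : Ideal.span {g} ≤ X + N := by
    rw [Ideal.span_le, Set.singleton_subset_iff]
    exact Submodule.add_mem _ (Submodule.mem_sup_left (Ideal.subset_span rfl))
      (Submodule.mem_sup_right (Ideal.subset_span rfl))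
  have hXg' : X ≤ Ideal.span {g} + N := by
    rw [hX, Ideal.span_le, Set.singleton_subset_iff]
    have h4 : (1 : MonoidAlgebra ℤ G) - MonoidAlgebra.of ℤ G φt⁻¹
        = g - (Nat.card I : MonoidAlgebra ℤ G) := by rw [hg]; ring
    rw [h4]
    exact Submodule.sub_mem _ (Submodule.mem_sup_left (Ideal.subset_span rfl))
      (Submodule.mem_sup_right (Ideal.subset_span rfl))
  constructor
  · rw [main]
    simp_rw [← Ideal.span_singleton_pow]
    exact le_antisymm (shift X (Ideal.span {g}) hXg') (shift (Ideal.span {g}) X hXg)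
  · rw [main]
    simp_rw [← Ideal.span_singleton_pow]
    rfl
end

section
/- Let R be a commutative ring, A an m×n matrix over R, and I = (a_1,…,a_r) a finitely generated ideal of R. Let A' be the (m + rn)×n matrix obtained from A by appending, for each 1 ≤ k ≤ r, the n rows of the scalar matrix a_k·Id_n. Then Fitt_0(A') = Σ_{i=0}^n I^i·Fitt_i(A). (Equivalently, if X is an R-module generated by n elements with presentation matrix A, then Fitt_{0,R}(X/IX) = Σ_{i=0}^n I^i·Fitt_{i,R}(X), since A' is a presentation matrix of X/IX.) -/
open Pointwise

/-- `Fitt_i(A)`: the ideal generated by the `(n-i) × (n-i)` minors of a matrix `A`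
with `n` columns (so `Fitt_i(A) = (1)` for `i ≥ n`). -/
noncomputable def fittMat {R : Type} [CommRing R] {m n : Type} [Fintype m] [Fintype n]
    (A : Matrix m n R) (i : ℕ) : Ideal R :=
  Ideal.span {x : R |
    ∃ (r : Fin (Fintype.card n - i) → m) (c : Fin (Fintype.card n - i) → n),
      x = (A.submatrix r c).det}

@[simp] lemma elim_inl_mat {R α β γ : Type} (A : Matrix α β R) (g : γ → β → R) (x : α) (y : β) :
    Sum.elim A g (Sum.inl x) y = A x y := rfl

@[simp] lemma elim_inr_mat {R α β γ : Type} (A : Matrix α β R) (g : γ → β → R) (z : γ) (y : β) :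
    Sum.elim A g (Sum.inr z) y = g z y := rfl

@[simp] lemma submatrix_elim_mat {R α β γ κ δ : Type} (A : Matrix α β R) (g : γ → β → R)
    (ρ : κ → α ⊕ γ) (c : δ → β) (x : κ) (y : δ) :
    Matrix.submatrix (Sum.elim A g) ρ c x y = Sum.elim A g (ρ x) (c y) := rfl

noncomputable def spanMinors {R : Type} [CommRing R] {ι : Type} {n : ℕ}
    (A : Matrix ι (Fin n) R) (s : ℕ) : Ideal R :=
  Ideal.span {x : R | ∃ (r : Fin s → ι) (c : Fin s → Fin n), x = (A.submatrix r c).det}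

lemma fittMat_fin {R : Type} [CommRing R] {ι : Type} [Fintype ι] {n : ℕ}
    (A : Matrix ι (Fin n) R) (i : ℕ) : fittMat A i = spanMinors A (n - i) := by
  have h : fittMat A i = spanMinors A (Fintype.card (Fin n) - i) := rfl
  rw [h, Fintype.card_fin]

lemma det_updateRow_finset_sum {R : Type} [CommRing R] {n : Type} [DecidableEq n] [Fintype n]
    {ι : Type} (M : Matrix n n R) (j : n) (s : Finset ι) (u : ι → n → R) :
    (M.updateRow j (∑ i ∈ s, u i)).det = ∑ i ∈ s, (M.updateRow j (u i)).det := by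
  classical
  induction s using Finset.cons_induction with
  | empty =>
      simp only [Finset.sum_empty]
      exact Matrix.det_eq_zero_of_row_eq_zero j (fun k => by simp)
  | cons i s hi ih =>
      rw [Finset.sum_cons, Matrix.det_updateRow_add, ih, Finset.sum_cons]

lemma det_single_row {R : Type} [CommRing R] {q : ℕ} (N : Matrix (Fin (q+1)) (Fin (q+1)) R)
    (i c : Fin (q+1)) (h : N i = Pi.single c 1) :
    N.det = (-1)^((i:ℕ)+(c:ℕ)) * (N.submatrix i.succAbove c.succAbove).det := by
  rw [Matrix.det_succ_row N i, Finset.sum_eq_single c]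
  · rw [h]; simp [Pi.single_apply]
  · intro j _ hj; rw [h]; simp [Pi.single_apply, hj]
  · simp

lemma aux_fwd {R : Type} [CommRing R] {m n r : ℕ} (A : Matrix (Fin m) (Fin n) R)
    (a : Fin r → R) :
    ∀ (q : ℕ) (ρ : Fin q → (Fin m ⊕ Fin r × Fin n)) (γ : Fin q → Fin n),
    (Matrix.det (Matrix.submatrix (Sum.elim A
        (fun (kl : Fin r × Fin n) (c : Fin n) => if c = kl.2 then a kl.1 else 0))
          ρ γ) ∈
      (Ideal.span (Set.range a)) ^ ((Finset.univ.filter fun x => (ρ x).isRight).card) *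
        spanMinors A (q - (Finset.univ.filter fun x => (ρ x).isRight).card)) := by
  intro q
  induction q with
  | zero =>
      intro ρ γ
      have h0 : (Finset.univ.filter fun x => (ρ x).isRight).card = 0 := by simp
      rw [h0, pow_zero, one_mul]
      refine Ideal.subset_span ⟨Fin.elim0, Fin.elim0, ?_⟩
      haveI : IsEmpty (Fin (0 - 0)) := inferInstanceAs (IsEmpty (Fin 0))
      rw [Matrix.det_isEmpty, Matrix.det_isEmpty]
  | succ q ih =>
      intro ρ γ
      by_cases hex : ∃ x, (ρ x).isRight
      · obtain ⟨x₀, hx₀⟩ := hex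
        obtain ⟨kl, hkl⟩ := Sum.isRight_iff.mp hx₀
        set A' : Matrix (Fin m ⊕ Fin r × Fin n) (Fin n) R := Sum.elim A
          (fun (kl : Fin r × Fin n) (c : Fin n) => if c = kl.2 then a kl.1 else 0) with hA'
        set M : Matrix (Fin (q+1)) (Fin (q+1)) R := A'.submatrix ρ γ with hM
        set u : Fin (q+1) → R := fun c => if γ c = kl.2 then (1:R) else 0 with hu
        have hrow : M x₀ = a kl.1 • u := by
          funext d
          simp only [hM, Matrix.submatrix_apply, hkl, hA', submatrix_elim_mat, Sum.elim_inr, elim_inr_mat, hu, Pi.smul_apply,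
            smul_eq_mul, mul_ite, mul_one, mul_zero]
        have h1 : M.det = a kl.1 * (M.updateRow x₀ u).det := by
          conv_lhs => rw [show M = M.updateRow x₀ (a kl.1 • u) by
            rw [← hrow, Matrix.updateRow_eq_self]]
          rw [Matrix.det_updateRow_smul]
        have husum : u = ∑ c ∈ Finset.univ.filter (fun c => γ c = kl.2), Pi.single c (1:R) := by
          funext d
          simp only [hu, Finset.sum_apply, Finset.sum_pi_single, Finset.mem_filter,
            Finset.mem_univ, true_and]
        have h2 : (M.updateRow x₀ u).det
            = ∑ c ∈ Finset.univ.filter (fun c => γ c = kl.2),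
                (M.updateRow x₀ (Pi.single c (1:R))).det := by
          rw [husum, det_updateRow_finset_sum]
        set t' := (Finset.univ.filter fun x => (ρ (x₀.succAbove x)).isRight).card with ht'
        have hcard : (Finset.univ.filter fun x => (ρ x).isRight).card = t' + 1 := by
          rw [Finset.card_filter,
            Fin.sum_univ_succAbove (fun x => if (ρ x).isRight then 1 else 0) x₀, hkl, ht',
            Finset.card_filter]
          simp [add_comm]
        have hsum : (M.updateRow x₀ u).det ∈
            (Ideal.span (Set.range a)) ^ t' * spanMinors A (q - t') := by
          rw [h2]
          refine Ideal.sum_mem _ (fun c hc => ?_)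
          rw [det_single_row (M.updateRow x₀ (Pi.single c (1:R))) x₀ c
            (Matrix.updateRow_self)]
          refine Ideal.mul_mem_left _ _ ?_
          have h4 : (M.updateRow x₀ (Pi.single c (1:R))).submatrix x₀.succAbove c.succAbove
              = A'.submatrix (ρ ∘ x₀.succAbove) (γ ∘ c.succAbove) := by
            ext x y
            simp [hM, Matrix.updateRow_ne (Fin.succAbove_ne x₀ x)]
          rw [h4]
          exact ih (ρ ∘ x₀.succAbove) (γ ∘ c.succAbove)
        have hI : (Ideal.span (Set.range a)) ^ (t' + 1) * spanMinors A (q + 1 - (t' + 1))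
            = (Ideal.span (Set.range a)) *
              ((Ideal.span (Set.range a)) ^ t' * spanMinors A (q - t')) := by
          rw [Nat.succ_sub_succ, pow_succ]
          ring
        rw [hcard, hI, h1]
        exact Ideal.mul_mem_mul (Ideal.subset_span ⟨kl.1, rfl⟩) hsum
      · push_neg at hex
        have h0 : (Finset.univ.filter fun x => (ρ x).isRight).card = 0 := by
          simp only [Finset.card_eq_zero, Finset.filter_eq_empty_iff]
          intro x _
          simpa using hex x
        rw [h0, pow_zero, one_mul, Nat.sub_zero]
        have hl : ∀ x, ∃ v, ρ x = Sum.inl v := fun x => by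
          cases hx : ρ x with
          | inl v => exact ⟨v, rfl⟩
          | inr w => exact absurd (by rw [hx]; rfl) (hex x)
        choose ρ' hρ' using hl
        refine Ideal.subset_span ⟨ρ', γ, ?_⟩
        have heq : Matrix.submatrix (Sum.elim A
            (fun (kl : Fin r × Fin n) (c : Fin n) => if c = kl.2 then a kl.1 else 0))
            ρ γ = A.submatrix ρ' γ := by
          ext x y
          simp [hρ' x]
        rw [heq]

lemma key_rev {R : Type} [CommRing R] {m n r : ℕ} (A : Matrix (Fin m) (Fin n) R)
    (a : Fin r → R) {i : ℕ} (hi : i ≤ n) (k : Fin i → Fin r)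
    (r' : Fin (n - i) → Fin m) (c : Fin (n - i) → Fin n) :
    (∏ s, a (k s)) * (A.submatrix r' c).det ∈
      spanMinors (Matrix.of (Sum.elim A
        (fun (kl : Fin r × Fin n) (c : Fin n) => if c = kl.2 then a kl.1 else 0))) n := by
  classical
  set A' : Matrix (Fin m ⊕ Fin r × Fin n) (Fin n) R := Matrix.of (Sum.elim A
    (fun (kl : Fin r × Fin n) (c : Fin n) => if c = kl.2 then a kl.1 else 0)) with hA'
  by_cases hc : Function.Injective c
  · set t : Finset (Fin n) := (Finset.univ.image c)ᶜ with hT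
    have hcardim : (Finset.univ.image c).card = n - i := by
      rw [Finset.card_image_of_injective _ hc, Finset.card_univ, Fintype.card_fin]
    have hcardt : t.card = i := by
      rw [hT, Finset.card_compl, hcardim, Fintype.card_fin]
      omega
    set l : Fin i → Fin n := fun s => t.orderEmbOfFin hcardt s with hL
    have hl : Function.Injective l := (t.orderEmbOfFin hcardt).injective
    have hlt : ∀ s, l s ∈ t := fun s => Finset.orderEmbOfFin_mem t hcardt s
    have hcl : ∀ s' t', c t' ≠ l s' := by
      intro s' t' h
      have h2 := hlt s'
      rw [hT, Finset.mem_compl] at h2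
      exact h2 (h ▸ Finset.mem_image_of_mem c (Finset.mem_univ t'))
    have hinj : Function.Injective (Sum.elim c l) :=
      Function.Injective.sumElim hc hl (fun x y => hcl y x)
    have hbij : Function.Bijective (Sum.elim c l) := by
      refine (Fintype.bijective_iff_injective_and_card _).mpr ⟨hinj, ?_⟩
      simp only [Fintype.card_sum, Fintype.card_fin]
      omega
    set e := Equiv.ofBijective _ hbij with he
    set ρ₀ : Fin (n - i) ⊕ Fin i → (Fin m ⊕ Fin r × Fin n) :=
      Sum.elim (Sum.inl ∘ r') (fun s => Sum.inr (k s, l s)) with hρ₀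
    have hblock : A'.submatrix ρ₀ (Sum.elim c l)
        = Matrix.fromBlocks (A.submatrix r' c) (A.submatrix r' l) 0
            (Matrix.diagonal fun s => a (k s)) := by
      ext x y
      cases x with
      | inl x =>
          cases y with
          | inl y => simp [hA', hρ₀]
          | inr y => simp [hA', hρ₀]
      | inr x =>
          cases y with
          | inl y => simp [hA', hρ₀, if_neg (hcl x y)]
          | inr y =>
              by_cases hxy : y = x
              · subst hxy; simp [hA', hρ₀, Matrix.diagonal]
              · simp [hA', hρ₀, Matrix.diagonal, if_neg (fun h => hxy (hl h)), hxy,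
                  if_neg (Ne.symm hxy)]
    have hdet : (A'.submatrix ρ₀ (Sum.elim c l)).det
        = (A.submatrix r' c).det * ∏ s, a (k s) := by
      rw [hblock, Matrix.det_fromBlocks_zero₂₁, Matrix.det_diagonal]
    refine Ideal.subset_span ⟨ρ₀ ∘ e.symm, (Sum.elim c l) ∘ e.symm, ?_⟩
    have hsub : A'.submatrix (ρ₀ ∘ e.symm) ((Sum.elim c l) ∘ e.symm)
        = (A'.submatrix ρ₀ (Sum.elim c l)).submatrix e.symm e.symm := rfl
    rw [hsub, Matrix.det_submatrix_equiv_self e.symm, hdet, mul_comm]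
  · rw [Function.not_injective_iff] at hc
    obtain ⟨t1, t2, ht, hne⟩ := hc
    have : (A.submatrix r' c).det = 0 :=
      Matrix.det_zero_of_column_eq hne (fun x => by simp [Matrix.submatrix_apply, ht])
    rw [this, mul_zero]
    exact Ideal.zero_mem _

/-- for an `m × n` matrix `A` over `R`, a finitely generated ideal
`I = (a_1, …, a_r)`, and `A'` the `(m + rn) × n` matrix obtained from `A` by appending,
for each `k`, the `n` rows of the scalar matrix `a_k·Id_n`, one has
`Fitt_0(A') = Σ_{i=0}^n I^i·Fitt_i(A)`.  (Equivalently, if `X` is presented by `A` then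
`Fitt_{0,R}(X/IX) = Σ_{i=0}^n I^i·Fitt_{i,R}(X)`, since `A'` presents `X/IX`.) -/
theorem statement16 {R : Type} [CommRing R] {m n r : ℕ}
    (A : Matrix (Fin m) (Fin n) R) (a : Fin r → R) :
    fittMat (Sum.elim A
        (fun (kl : Fin r × Fin n) (c : Fin n) => if c = kl.2 then a kl.1 else 0)) 0
      = ∑ i ∈ Finset.range (n + 1), (Ideal.span (Set.range a)) ^ i * fittMat A i := by
  classical
  rw [show fittMat (Sum.elim A
        (fun (kl : Fin r × Fin n) (c : Fin n) => if c = kl.2 then a kl.1 else 0)) 0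
      = spanMinors (Sum.elim A
        (fun (kl : Fin r × Fin n) (c : Fin n) => if c = kl.2 then a kl.1 else 0) :
        Matrix (Fin m ⊕ Fin r × Fin n) (Fin n) R) n from fittMat_fin _ 0]
  simp only [fittMat_fin, Nat.sub_zero]
  apply le_antisymm
  · rw [show spanMinors (Sum.elim A
        (fun (kl : Fin r × Fin n) (c : Fin n) => if c = kl.2 then a kl.1 else 0) :
        Matrix (Fin m ⊕ Fin r × Fin n) (Fin n) R) n = Ideal.span _ from rfl, Ideal.span_le]
    rintro x ⟨ρ, γ, rfl⟩
    have h := aux_fwd A a n ρ γ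
    have ht : (Finset.univ.filter fun x => (ρ x).isRight).card ≤ n :=
      le_trans (Finset.card_filter_le _ _) (by simp)
    exact SetLike.le_def.mp
      (Finset.single_le_sum
        (f := fun i => (Ideal.span (Set.range a)) ^ i * spanMinors A (n - i))
        (fun i _ => zero_le) (Finset.mem_range.mpr (by omega))) h
  · refine Finset.sum_induction _ (fun J => J ≤ spanMinors (Sum.elim A
        (fun (kl : Fin r × Fin n) (c : Fin n) => if c = kl.2 then a kl.1 else 0) :
        Matrix (Fin m ⊕ Fin r × Fin n) (Fin n) R) n) (fun x y hx hy => ?_) ?_ ?_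
    · rw [Submodule.add_eq_sup]; exact sup_le hx hy
    · exact zero_le
    · intro i hi
      have hi' : i ≤ n := by
        rw [Finset.mem_range] at hi; omega
      rw [Ideal.mul_le]
      intro p hp d hd
      induction hd using Submodule.span_induction with
      | mem d hdm =>
          obtain ⟨r', c, rfl⟩ := hdm
          rw [show (Ideal.span (Set.range a)) ^ i = Ideal.span (Set.range a ^ i) from
            Submodule.span_pow _ i] at hp
          induction hp using Submodule.span_induction with
          | mem p hpm =>
              obtain ⟨f, hf⟩ := Set.mem_pow.mp hpm
              have hp2 : p = ∏ s : Fin i, (f s : R) := by rw [← hf, List.prod_ofFn]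
              choose kk hkk using fun s => (f s).2
              rw [hp2, show (∏ s : Fin i, (f s : R)) = ∏ s, a (kk s) from
                Finset.prod_congr rfl (fun s _ => (hkk s).symm)]
              exact key_rev A a hi' kk r' c
          | zero => rw [zero_mul]; exact zero_mem _
          | add x y _ _ hx' hy' => rw [add_mul]; exact add_mem hx' hy'
          | smul rr x _ hx' =>
              rw [smul_eq_mul, mul_assoc]
              exact Ideal.mul_mem_left _ _ hx'
      | zero => rw [mul_zero]; exact zero_mem _
      | add x y _ _ hx' hy' => rw [mul_add]; exact add_mem hx' hy'
      | smul rr x _ hx' =>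
          rw [smul_eq_mul, mul_left_comm]
          exact Ideal.mul_mem_left _ _ hx'
end
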